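/- In a crystallographic group Γ, the translations are precisely those elements having only finitely many conjugates in Γ, and consequently the center Z(Γ) consists entirely of translations. -/

import Mathlib

noncomputable section

/-- Euclidean `n`-space. -/
abbrev E (n : ℕ) := EuclideanSpace ℝ (Fin n)

/-- An isometry `a + A` of `E n`, acting by `x ↦ a + A x`, with `A` a linear isometry
(an element of `O(n)`). -/
@[ext] structure Iso (n : ℕ) where
  a : E n
  A : E n ≃ₗᵢ[ℝ] E n

namespace Iso

variable {n : ℕ}

instance : Mul (Iso n) := ⟨fun x y => ⟨x.a + x.A y.a, y.A.trans x.A⟩⟩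
instance : One (Iso n) := ⟨⟨0, LinearIsometryEquiv.refl ℝ (E n)⟩⟩
instance : Inv (Iso n) := ⟨fun x => ⟨-(x.A.symm x.a), x.A.symm⟩⟩

@[simp] lemma mul_a (x y : Iso n) : (x * y).a = x.a + x.A y.a := rfl
@[simp] lemma mul_A (x y : Iso n) : (x * y).A = y.A.trans x.A := rfl
@[simp] lemma one_a : (1 : Iso n).a = 0 := rfl
@[simp] lemma one_A : (1 : Iso n).A = LinearIsometryEquiv.refl ℝ (E n) := rfl
@[simp] lemma inv_a (x : Iso n) : (x⁻¹).a = -(x.A.symm x.a) := rfl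
@[simp] lemma inv_A (x : Iso n) : (x⁻¹).A = x.A.symm := rfl

/-- The group of isometries of `E n`, with composition as multiplication. -/
instance : Group (Iso n) where
  mul_assoc x y z := by
    refine Iso.ext ?_ ?_
    · simp [add_assoc]
    · ext v; simp
  one_mul x := by refine Iso.ext ?_ ?_ <;> simp
  mul_one x := by refine Iso.ext ?_ ?_ <;> simp
  inv_mul_cancel x := by
    refine Iso.ext ?_ ?_
    · simp
    · ext v; simp

/-- The action of the isometry `a + A` on a point `x` of `E n`: `x ↦ a + A x`. -/
def act (g : Iso n) (x : E n) : E n := g.a + g.A x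

/-- The translation `a + I`. -/
def trans (a : E n) : Iso n := ⟨a, LinearIsometryEquiv.refl ℝ (E n)⟩

/-- `g` is a translation if its linear part is the identity. -/
def IsTranslation (g : Iso n) : Prop := g.A = LinearIsometryEquiv.refl ℝ (E n)

/-- The subgroup of all translations of `E n`. -/
def translations (n : ℕ) : Subgroup (Iso n) where
  carrier := {g | g.IsTranslation}
  mul_mem' := by
    intro x y hx hy
    simp only [Set.mem_setOf_eq, IsTranslation] at *
    rw [mul_A, hx, hy]; simp
  one_mem' := rfl
  inv_mem' := by
    intro x hx
    simp only [Set.mem_setOf_eq, IsTranslation] at *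
    rw [inv_A, hx]; rfl

/-- The set of translation vectors of a set `S` of isometries:
`{a : E n | a + I ∈ S}`. -/
def transVecs (S : Set (Iso n)) : Set (E n) := {a | Iso.trans a ∈ S}

/-- `Span(S)`: the real linear span of the translation vectors of `S`. -/
def spanS (S : Set (Iso n)) : Submodule ℝ (E n) :=
  Submodule.span ℝ (transVecs S)

/-- A crystallographic (space) group: a group of isometries of `E n` that acts
properly discontinuously (equivalently, is discrete) and cocompactly. -/
def IsCrystallographic (Γ : Subgroup (Iso n)) : Prop :=
  (∀ K : Set (E n), IsCompact K →
      {g : Iso n | g ∈ Γ ∧ ((Iso.act g '' K) ∩ K).Nonempty}.Finite) ∧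
  ∃ K : Set (E n), IsCompact K ∧ ∀ x : E n, ∃ g ∈ Γ, g.act x ∈ K

/-- `N` is a normal subgroup of `Γ`. -/
def IsNormalIn (N Γ : Subgroup (Iso n)) : Prop :=
  N ≤ Γ ∧ ∀ g ∈ Γ, ∀ x ∈ N, g * x * g⁻¹ ∈ N

/-- The completion of `S` in `Γ`:
`S̄ = {b+B ∈ Γ : b ∈ Span(S) and Span(S)ᗮ ⊆ Fix(B)}`. -/
def completion (Γ : Subgroup (Iso n)) (S : Set (Iso n)) : Set (Iso n) :=
  {g | g ∈ Γ ∧ g.a ∈ spanS S ∧ ∀ x ∈ (spanS S)ᗮ, g.A x = x}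

end Iso

open MeasureTheory in
lemma aux_avoid {n : ℕ} {ι : Type*} (S : Finset ι) (p : ι → Submodule ℝ (E n))
    (hS : ∀ i ∈ S, p i ≠ ⊤) : ∃ u : E n, ∀ i ∈ S, u ∉ p i := by
  by_contra hcon
  push_neg at hcon
  have hsub : (Set.univ : Set (E n)) ⊆ ⋃ i ∈ S, (p i : Set (E n)) := by
    intro u _
    obtain ⟨i, hi, hui⟩ := hcon u
    exact Set.mem_biUnion hi hui
  have h0 : volume (Set.univ : Set (E n)) = 0 := by
    refine le_antisymm ?_ zero_le
    calc volume (Set.univ : Set (E n)) ≤ volume (⋃ i ∈ S, (p i : Set (E n))) :=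
          measure_mono hsub
      _ ≤ ∑ i ∈ S, volume (p i : Set (E n)) := measure_biUnion_finset_le _ _
      _ = 0 := Finset.sum_eq_zero fun i hi => Measure.addHaar_submodule _ _ (hS i hi)
  have hpos : (0:ENNReal) < volume (Set.univ : Set (E n)) :=
    isOpen_univ.measure_pos _ ⟨0, trivial⟩
  simp [h0] at hpos

set_option maxHeartbeats 1000000 in
/-- In a crystallographic group `Γ`, the translations are precisely
the elements having only finitely many conjugates in `Γ`; consequently every element
of the center `Z(Γ)` is a translation. -/
theorem stmt9 {n : ℕ} (Γ : Subgroup (Iso n)) (hΓ : Iso.IsCrystallographic Γ) :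
    (∀ g ∈ Γ, (g.IsTranslation ↔ {h : Iso n | ∃ k ∈ Γ, k * g * k⁻¹ = h}.Finite)) ∧
    ∀ g ∈ Subgroup.centralizer (Γ : Set (Iso n)) ⊓ Γ, g.IsTranslation := by

  obtain ⟨hdisc, K', hK'c, hK'⟩ := hΓ
  obtain ⟨r', hr'0, hK'b⟩ : ∃ r', 0 ≤ r' ∧ K' ⊆ Metric.closedBall 0 r' := by
    obtain ⟨r', h⟩ := hK'c.isBounded.subset_closedBall 0
    exact ⟨max r' 0, le_max_right _ _,
      h.trans (Metric.closedBall_subset_closedBall (le_max_left _ _))⟩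
  have main : ∀ g ∈ Γ, (g.IsTranslation ↔
      {h : Iso n | ∃ k ∈ Γ, k * g * k⁻¹ = h}.Finite) := by
    intro g hg
    constructor
    · intro ht
      have hc := hdisc (Metric.closedBall 0 ‖g.a‖) (isCompact_closedBall _ _)
      refine hc.subset ?_
      rintro h ⟨k, hk, rfl⟩
      have hconj : k * g * k⁻¹ = Iso.trans (k.A g.a) := by
        unfold Iso.IsTranslation at ht
        refine Iso.ext ?_ ?_
        · simp [ht, Iso.trans]
        · ext v; simp [ht, Iso.trans]
      refine ⟨Γ.mul_mem (Γ.mul_mem hk hg) (Γ.inv_mem hk), ?_⟩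
      refine ⟨k.A g.a, ⟨⟨0, ?_, ?_⟩, ?_⟩⟩
      · simp [Metric.mem_closedBall]
      · simp [hconj, Iso.act, Iso.trans]
      · simp [Metric.mem_closedBall]
    · intro hfin
      by_contra hA
      unfold Iso.IsTranslation at hA
      set S := hfin.toFinset with hSdef
      have hgS : g ∈ S := hfin.mem_toFinset.mpr ⟨1, Γ.one_mem, by group⟩
      have hSne : S.Nonempty := ⟨g, hgS⟩
      have hAne : ∀ h ∈ S, h.A ≠ LinearIsometryEquiv.refl ℝ (E n) := by
        intro h hh heq
        obtain ⟨k, hk, rfl⟩ := hfin.mem_toFinset.mp hh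
        apply hA
        refine LinearIsometryEquiv.ext fun v => ?_
        have h1 : (k * g * k⁻¹).A (k.A v) = k.A v := by rw [heq]; simp
        simp only [Iso.mul_A, Iso.inv_A, LinearIsometryEquiv.trans_apply,
          LinearIsometryEquiv.symm_apply_apply] at h1
        have := k.A.injective h1
        simpa using this
      have hker : ∀ h ∈ S,
          LinearMap.ker ((LinearMap.id : E n →ₗ[ℝ] E n) - h.A.toLinearEquiv.toLinearMap) ≠ ⊤ := by
        intro h hh heq
        apply hAne h hh
        refine LinearIsometryEquiv.ext fun v => ?_
        have hv : v ∈ LinearMap.ker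
            ((LinearMap.id : E n →ₗ[ℝ] E n) - h.A.toLinearEquiv.toLinearMap) := by
          rw [heq]; trivial
        rw [LinearMap.mem_ker, LinearMap.sub_apply, LinearMap.id_apply, sub_eq_zero] at hv
        simpa using hv.symm
      obtain ⟨u, hu⟩ := aux_avoid S
        (fun h => LinearMap.ker ((LinearMap.id : E n →ₗ[ℝ] E n) - h.A.toLinearEquiv.toLinearMap))
        hker
      have hune : ∀ h ∈ S, u - h.A u ≠ 0 := by
        intro h hh heq
        apply hu h hh
        rw [LinearMap.mem_ker, LinearMap.sub_apply, LinearMap.id_apply]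
        simpa using heq
      set M := S.sup' hSne (fun h => ‖h.a‖) with hMdef
      set δ := S.inf' hSne (fun h => ‖u - h.A u‖) with hδdef
      have hδpos : 0 < δ := by
        rw [hδdef, Finset.lt_inf'_iff]
        intro h hh
        exact norm_pos_iff.mpr (hune h hh)
      have hM0 : 0 ≤ M := le_trans (norm_nonneg g.a) (Finset.le_sup' (fun h => ‖h.a‖) hgS)
      set c := (2 * r' + M + ‖g.a‖ + 1) / δ with hcdef
      have hnum : 0 < 2 * r' + M + ‖g.a‖ + 1 := by positivity
      have hc : 0 < c := div_pos hnum hδpos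
      set v := c • u with hvdef
      obtain ⟨γ, hγ, hγK⟩ := hK' v
      have hkΓ : γ⁻¹ ∈ Γ := Γ.inv_mem hγ
      set h := γ⁻¹ * g * γ⁻¹⁻¹ with hhdef
      have hhS : h ∈ S := hfin.mem_toFinset.mpr ⟨γ⁻¹, hkΓ, rfl⟩
      have hkv : ‖(γ⁻¹).a - v‖ ≤ r' := by
        have h1 : ‖γ.a + γ.A v‖ ≤ r' := by
          have := hK'b hγK
          simpa [Metric.mem_closedBall, Iso.act, dist_eq_norm] using this
        have h2 : (γ⁻¹).a - v = - γ.A.symm (γ.a + γ.A v) := by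
          simp [map_add]
          abel
        rw [h2, norm_neg, γ.A.symm.norm_map]
        exact h1
      have hid : (γ⁻¹).a - h.A (γ⁻¹).a = h.a - (γ⁻¹).A g.a := by
        have hmul : h * γ⁻¹ = γ⁻¹ * g := by rw [hhdef]; group
        have ha := congrArg Iso.a hmul
        simp only [Iso.mul_a] at ha
        have ha' : h.a + h.A (γ⁻¹).a = (γ⁻¹).a + (γ⁻¹).A g.a := ha
        rw [sub_eq_sub_iff_add_eq_add]
        exact ha'.symm
      have hMa : ‖h.a‖ ≤ M := Finset.le_sup' (fun h => ‖h.a‖) hhS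
      have hbound : ‖v - h.A v‖ ≤ 2 * r' + M + ‖g.a‖ := by
        have e : v - h.A v = ((v - (γ⁻¹).a) - h.A (v - (γ⁻¹).a)) + ((γ⁻¹).a - h.A (γ⁻¹).a) := by
          rw [map_sub]; abel
        rw [e, hid]
        calc ‖((v - (γ⁻¹).a) - h.A (v - (γ⁻¹).a)) + (h.a - (γ⁻¹).A g.a)‖
            ≤ ‖(v - (γ⁻¹).a) - h.A (v - (γ⁻¹).a)‖ + ‖h.a - (γ⁻¹).A g.a‖ := norm_add_le _ _
          _ ≤ (‖v - (γ⁻¹).a‖ + ‖h.A (v - (γ⁻¹).a)‖) + (‖h.a‖ + ‖(γ⁻¹).A g.a‖) :=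
              add_le_add (norm_sub_le _ _) (norm_sub_le _ _)
          _ = 2 * ‖v - (γ⁻¹).a‖ + ‖h.a‖ + ‖g.a‖ := by
              rw [h.A.norm_map, (γ⁻¹).A.norm_map]; ring
          _ ≤ 2 * r' + M + ‖g.a‖ := by
              have h3 : ‖v - (γ⁻¹).a‖ ≤ r' := by rw [norm_sub_rev]; exact hkv
              linarith
      have hlow : 2 * r' + M + ‖g.a‖ + 1 ≤ ‖v - h.A v‖ := by
        have e : v - h.A v = c • (u - h.A u) := by
          rw [hvdef, map_smul, smul_sub]
        rw [e, norm_smul, Real.norm_eq_abs, abs_of_pos hc]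
        have hδle : δ ≤ ‖u - h.A u‖ := by
          rw [hδdef]; exact Finset.inf'_le _ hhS
        have : c * δ ≤ c * ‖u - h.A u‖ := by
          exact mul_le_mul_of_nonneg_left hδle hc.le
        have hcδ : c * δ = 2 * r' + M + ‖g.a‖ + 1 := by
          rw [hcdef]; field_simp
        linarith
      linarith
  refine ⟨main, ?_⟩
  intro g hg
  rw [Subgroup.mem_inf] at hg
  obtain ⟨hgc, hgΓ⟩ := hg
  rw [main g hgΓ]
  apply Set.Finite.subset (Set.finite_singleton g)
  rintro h ⟨k, hk, rfl⟩
  have hcomm : k * g = g * k := Subgroup.mem_centralizer_iff.mp hgc k hk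
  rw [Set.mem_singleton_iff, hcomm, mul_assoc, mul_inv_cancel, mul_one]
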